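/- Let X and Y be ℝ^d-valued random variables with E‖X‖ < ∞ and E‖Y‖ < ∞. For unit vectors s, t in ℝ^d, the one-dimensional 1-Wasserstein distances of the projections satisfy |W₁(s·X, s·Y) − W₁(t·X, t·Y)| ≤ ‖t − s‖ · (E‖X‖ + E‖Y‖). -/

import Mathlib

open MeasureTheory ENNReal
open scoped RealInnerProductSpace

open ProbabilityTheory

/-- 1-Wasserstein distance: infimum over couplings of the expected distance. -/
noncomputable def W1 {B : Type*} [NormedAddCommGroup B] [MeasurableSpace B]
    (μ ν : Measure B) : ℝ≥0∞ :=
  ⨅ (π : Measure (B × B)) (_ : π.map Prod.fst = μ) (_ : π.map Prod.snd = ν),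
    ∫⁻ p, ‖p.1 - p.2‖₊ ∂π

lemma W1_le_of_coupling {B : Type*} [NormedAddCommGroup B] [MeasurableSpace B]
    {μ ν : Measure B} (π : Measure (B × B)) (h1 : π.map Prod.fst = μ)
    (h2 : π.map Prod.snd = ν) : W1 μ ν ≤ ∫⁻ p, ‖p.1 - p.2‖₊ ∂π := by
  refine iInf_le_of_le π ?_
  exact iInf_le_of_le h1 (iInf_le _ h2)

lemma exists_coupling_lt {B : Type*} [NormedAddCommGroup B] [MeasurableSpace B]
    {μ ν : Measure B} {r : ℝ≥0∞} (h : W1 μ ν < r) :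
    ∃ π : Measure (B × B), π.map Prod.fst = μ ∧ π.map Prod.snd = ν ∧
      ∫⁻ p, ‖p.1 - p.2‖₊ ∂π < r := by
  simp only [W1, iInf_lt_iff] at h
  obtain ⟨π, h1, h2, hc⟩ := h
  exact ⟨π, h1, h2, hc⟩

lemma W1_map_le {Ω : Type*} [MeasurableSpace Ω] (P : Measure Ω)
    (f g : Ω → ℝ) (hf : AEMeasurable f P) (hg : AEMeasurable g P) :
    W1 (P.map f) (P.map g) ≤ ∫⁻ ω, ‖f ω - g ω‖₊ ∂P := by
  have hfg : AEMeasurable (fun ω => (f ω, g ω)) P := hf.prodMk hg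
  refine le_trans (W1_le_of_coupling (P.map fun ω => (f ω, g ω)) ?_ ?_) ?_
  · exact Measure.fst_map_prodMk₀ hg
  · exact Measure.snd_map_prodMk₀ hf
  · rw [lintegral_map' (f := fun p : ℝ × ℝ => (‖p.1 - p.2‖₊ : ℝ≥0∞))
      (Measurable.aemeasurable (by fun_prop)) hfg]

lemma glue_bound (π₁ π₂ : Measure (ℝ × ℝ)) [IsProbabilityMeasure π₁]
    [IsProbabilityMeasure π₂] (h : π₁.map Prod.snd = π₂.map Prod.fst) :
    W1 (π₁.map Prod.fst) (π₂.map Prod.snd) ≤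
      ∫⁻ p, ‖p.1 - p.2‖₊ ∂π₁ + ∫⁻ p, ‖p.1 - p.2‖₊ ∂π₂ := by
  haveI : IsProbabilityMeasure (π₁.map Prod.swap) :=
    Measure.isProbabilityMeasure_map measurable_swap.aemeasurable
  set ν : Measure ℝ := π₂.fst with hν
  have hswfst : (π₁.map Prod.swap).fst = ν := by
    rw [Measure.fst_map_swap]; exact h
  set κ₁ := (π₁.map Prod.swap).condKernel with hκ₁def
  set κ₂ := π₂.condKernel with hκ₂def
  have hκ₁ : ν ⊗ₘ κ₁ = π₁.map Prod.swap := by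
    rw [← hswfst]; exact (π₁.map Prod.swap).disintegrate _
  have hκ₂ : ν ⊗ₘ κ₂ = π₂ := π₂.disintegrate _
  set τ : Measure (ℝ × (ℝ × ℝ)) := ν ⊗ₘ (κ₁ ×ₖ κ₂) with hτ
  -- marginal computations
  have hmap1 : ∀ s : Set ℝ, MeasurableSet s → τ ((Prod.fst ∘ Prod.snd : ℝ × (ℝ × ℝ) → ℝ) ⁻¹' s)
      = ∫⁻ y, κ₁ y s ∂ν := by
    intro s hs
    rw [hτ, Measure.compProd_apply ((measurable_fst.comp measurable_snd) hs)]
    refine lintegral_congr fun y => ?_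
    rw [Kernel.prod_apply]
    have : (Prod.mk y ⁻¹' ((Prod.fst ∘ Prod.snd : ℝ × (ℝ × ℝ) → ℝ) ⁻¹' s)) = s ×ˢ Set.univ := by
      ext p; simp [Set.mem_prod]
    rw [this, Measure.prod_prod, measure_univ, mul_one]
  have hmap2 : ∀ s : Set ℝ, MeasurableSet s → τ ((Prod.snd ∘ Prod.snd : ℝ × (ℝ × ℝ) → ℝ) ⁻¹' s)
      = ∫⁻ y, κ₂ y s ∂ν := by
    intro s hs
    rw [hτ, Measure.compProd_apply ((measurable_snd.comp measurable_snd) hs)]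
    refine lintegral_congr fun y => ?_
    rw [Kernel.prod_apply]
    have : (Prod.mk y ⁻¹' ((Prod.snd ∘ Prod.snd : ℝ × (ℝ × ℝ) → ℝ) ⁻¹' s)) = Set.univ ×ˢ s := by
      ext p; simp [Set.mem_prod]
    rw [this, Measure.prod_prod, measure_univ, one_mul]
  have hsnd1 : ∀ (κ : Kernel ℝ ℝ) [IsMarkovKernel κ], ∀ s : Set ℝ, MeasurableSet s →
      (ν ⊗ₘ κ) (Prod.snd ⁻¹' s) = ∫⁻ y, κ y s ∂ν := by
    intro κ _ s hs
    rw [Measure.compProd_apply (measurable_snd hs)]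
    rfl
  set ρ : Measure (ℝ × ℝ) := τ.map Prod.snd with hρ
  have hfst : ρ.map Prod.fst = π₁.map Prod.fst := by
    rw [hρ, Measure.map_map measurable_fst measurable_snd]
    have h1 : π₁.map Prod.fst = (π₁.map Prod.swap).map Prod.snd := by
      rw [Measure.map_map measurable_snd measurable_swap]; rfl
    ext s hs
    rw [Measure.map_apply (measurable_fst.comp measurable_snd) hs, hmap1 s hs, h1, ← hκ₁,
      Measure.map_apply measurable_snd hs, hsnd1 κ₁ s hs]
  have hsnd : ρ.map Prod.snd = π₂.map Prod.snd := by
    rw [hρ, Measure.map_map measurable_snd measurable_snd]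
    ext s hs
    rw [Measure.map_apply (measurable_snd.comp measurable_snd) hs, hmap2 s hs, ← hκ₂,
      Measure.map_apply measurable_snd hs, hsnd1 κ₂ s hs]
  refine le_trans (W1_le_of_coupling ρ hfst hsnd) ?_
  rw [hρ, lintegral_map (by fun_prop) measurable_snd]
  have hle : ∫⁻ q, (‖q.2.1 - q.2.2‖₊ : ℝ≥0∞) ∂τ ≤
      ∫⁻ q, ((‖q.2.1 - q.1‖₊ : ℝ≥0∞) + ‖q.1 - q.2.2‖₊) ∂τ := by
    refine lintegral_mono fun q => ?_
    simp only [← enorm_eq_nnnorm, ← edist_eq_enorm_sub]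
    exact edist_triangle q.2.1 q.1 q.2.2
  refine le_trans hle ?_
  rw [lintegral_add_left (by fun_prop)]
  refine add_le_add (le_of_eq ?_) (le_of_eq ?_)
  · -- first term equals cost of π₁
    rw [hτ, Measure.lintegral_compProd (by fun_prop)]
    have hA : ∀ y : ℝ, ∫⁻ z, (‖z.1 - y‖₊ : ℝ≥0∞) ∂(κ₁ ×ₖ κ₂) y
        = ∫⁻ x, (‖x - y‖₊ : ℝ≥0∞) ∂κ₁ y := by
      intro y
      rw [Kernel.prod_apply, lintegral_prod _ (by fun_prop)]
      simp [lintegral_const]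
    calc ∫⁻ y, ∫⁻ z, (‖z.1 - y‖₊ : ℝ≥0∞) ∂(κ₁ ×ₖ κ₂) y ∂ν
        = ∫⁻ y, ∫⁻ x, (‖x - y‖₊ : ℝ≥0∞) ∂κ₁ y ∂ν := by
          exact lintegral_congr hA
      _ = ∫⁻ p : ℝ × ℝ, (‖p.2 - p.1‖₊ : ℝ≥0∞) ∂(ν ⊗ₘ κ₁) := by
          rw [Measure.lintegral_compProd (by fun_prop)]
      _ = ∫⁻ p : ℝ × ℝ, (‖p.1 - p.2‖₊ : ℝ≥0∞) ∂π₁ := by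
          rw [hκ₁, lintegral_map (by fun_prop) measurable_swap]
          simp
  · rw [hτ, Measure.lintegral_compProd (by fun_prop)]
    have hB : ∀ y : ℝ, ∫⁻ z, (‖y - z.2‖₊ : ℝ≥0∞) ∂(κ₁ ×ₖ κ₂) y
        = ∫⁻ x, (‖y - x‖₊ : ℝ≥0∞) ∂κ₂ y := by
      intro y
      rw [Kernel.prod_apply, lintegral_prod _ (by fun_prop)]
      simp [lintegral_const]
    calc ∫⁻ y, ∫⁻ z, (‖y - z.2‖₊ : ℝ≥0∞) ∂(κ₁ ×ₖ κ₂) y ∂ν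
        = ∫⁻ y, ∫⁻ x, (‖y - x‖₊ : ℝ≥0∞) ∂κ₂ y ∂ν := lintegral_congr hB
      _ = ∫⁻ p : ℝ × ℝ, (‖p.1 - p.2‖₊ : ℝ≥0∞) ∂(ν ⊗ₘ κ₂) := by
          rw [Measure.lintegral_compProd (by fun_prop)]
      _ = ∫⁻ p : ℝ × ℝ, (‖p.1 - p.2‖₊ : ℝ≥0∞) ∂π₂ := by rw [hκ₂]

lemma isProbabilityMeasure_of_coupling {B : Type*} [MeasurableSpace B]
    {μ : Measure B} [IsProbabilityMeasure μ] {π : Measure (B × B)}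
    (h : π.map Prod.fst = μ) : IsProbabilityMeasure π := by
  constructor
  have : π.map Prod.fst Set.univ = 1 := by rw [h]; exact measure_univ
  rwa [Measure.map_apply measurable_fst MeasurableSet.univ, Set.preimage_univ] at this

lemma W1_triangle (μ ν ρ : Measure ℝ) [IsProbabilityMeasure μ]
    [IsProbabilityMeasure ν] [IsProbabilityMeasure ρ] :
    W1 μ ρ ≤ W1 μ ν + W1 ν ρ := by
  refine ENNReal.le_of_forall_pos_le_add fun ε hε hfin => ?_
  have hε2 : ((ε : ℝ≥0∞) / 2) ≠ 0 := by
    simp [ENNReal.div_eq_zero_iff, hε.ne']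
  have hfin1 : W1 μ ν ≠ ⊤ := fun h => by simp [h] at hfin
  have hfin2 : W1 ν ρ ≠ ⊤ := fun h => by simp [h] at hfin
  obtain ⟨π₁, h11, h12, hc1⟩ := exists_coupling_lt
    (ENNReal.lt_add_right hfin1 hε2 : W1 μ ν < W1 μ ν + ε / 2)
  obtain ⟨π₂, h21, h22, hc2⟩ := exists_coupling_lt
    (ENNReal.lt_add_right hfin2 hε2 : W1 ν ρ < W1 ν ρ + ε / 2)
  haveI := isProbabilityMeasure_of_coupling h11
  haveI := isProbabilityMeasure_of_coupling h21
  have hmid : π₁.map Prod.snd = π₂.map Prod.fst := by rw [h12, h21]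
  have := glue_bound π₁ π₂ hmid
  rw [h11, h22] at this
  refine this.trans ?_
  calc ∫⁻ p, (‖p.1 - p.2‖₊ : ℝ≥0∞) ∂π₁ + ∫⁻ p, (‖p.1 - p.2‖₊ : ℝ≥0∞) ∂π₂
      ≤ (W1 μ ν + ε / 2) + (W1 ν ρ + ε / 2) := add_le_add hc1.le hc2.le
    _ = W1 μ ν + W1 ν ρ + ε := by
        rw [add_add_add_comm, ENNReal.add_halves]

lemma W1_le_lintegral_add (μ ν : Measure ℝ) [IsProbabilityMeasure μ]
    [IsProbabilityMeasure ν] :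
    W1 μ ν ≤ ∫⁻ x, ‖x‖₊ ∂μ + ∫⁻ x, ‖x‖₊ ∂ν := by
  refine le_trans (W1_le_of_coupling (μ.prod ν) Measure.fst_prod Measure.snd_prod) ?_
  have h1 : ∫⁻ p : ℝ × ℝ, (‖p.1 - p.2‖₊ : ℝ≥0∞) ∂(μ.prod ν)
      ≤ ∫⁻ p : ℝ × ℝ, ((‖p.1‖₊ : ℝ≥0∞) + ‖p.2‖₊) ∂(μ.prod ν) := by
    refine lintegral_mono fun p => ?_
    simp only [← enorm_eq_nnnorm, ← edist_eq_enorm_sub]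
    simpa [edist_comm] using edist_triangle p.1 0 p.2
  refine h1.trans ?_
  rw [lintegral_add_left (by fun_prop)]
  refine add_le_add (le_of_eq ?_) (le_of_eq ?_)
  · rw [lintegral_prod _ (by fun_prop)]
    simp [lintegral_const]
  · rw [lintegral_prod _ (by fun_prop)]
    simp [lintegral_const]

section Main

variable {d : ℕ} {Ω : Type*} [MeasurableSpace Ω]

lemma inner_aemeasurable (P : Measure Ω) {X : Ω → EuclideanSpace ℝ (Fin d)}
    (hXm : AEMeasurable X P) (v : EuclideanSpace ℝ (Fin d)) :
    AEMeasurable (fun ω => ⟪v, X ω⟫) P :=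
  ((continuous_const.inner continuous_id).measurable).comp_aemeasurable hXm

lemma lintegral_inner_le (P : Measure Ω) (X : Ω → EuclideanSpace ℝ (Fin d))
    (v : EuclideanSpace ℝ (Fin d)) :
    ∫⁻ ω, (‖⟪v, X ω⟫‖₊ : ℝ≥0∞) ∂P ≤ (‖v‖₊ : ℝ≥0∞) * ∫⁻ ω, (‖X ω‖₊ : ℝ≥0∞) ∂P := by
  rw [← lintegral_const_mul' _ _ ENNReal.coe_ne_top]
  refine lintegral_mono fun ω => ?_
  rw [← ENNReal.coe_mul, ENNReal.coe_le_coe]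
  exact nnnorm_inner_le_nnnorm v (X ω)

lemma lintegral_norm_eq (P : Measure Ω) {X : Ω → EuclideanSpace ℝ (Fin d)}
    (hX : Integrable (fun ω => ‖X ω‖) P) :
    ∫⁻ ω, (‖X ω‖₊ : ℝ≥0∞) ∂P = ENNReal.ofReal (∫ ω, ‖X ω‖ ∂P) := by
  rw [ofReal_integral_eq_lintegral_ofReal hX (Filter.Eventually.of_forall fun ω => norm_nonneg _)]
  simp [ofReal_norm]
  rfl

end Main

section Main2

variable {d : ℕ} {Ω : Type*} [MeasurableSpace Ω]

lemma W1_dir_le (P : Measure Ω) [IsProbabilityMeasure P]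
    {X : Ω → EuclideanSpace ℝ (Fin d)} (hXm : AEMeasurable X P)
    (hX : Integrable (fun ω => ‖X ω‖) P) (s t : EuclideanSpace ℝ (Fin d)) :
    W1 (P.map fun ω => ⟪s, X ω⟫) (P.map fun ω => ⟪t, X ω⟫) ≤
      ENNReal.ofReal (‖t - s‖) * ENNReal.ofReal (∫ ω, ‖X ω‖ ∂P) := by
  refine le_trans (W1_map_le P _ _ (inner_aemeasurable P hXm s)
    (inner_aemeasurable P hXm t)) ?_
  have heq : ∀ ω, (‖⟪s, X ω⟫ - ⟪t, X ω⟫‖₊ : ℝ≥0∞) = (‖⟪s - t, X ω⟫‖₊ : ℝ≥0∞) := by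
    intro ω; rw [← inner_sub_left]
  rw [lintegral_congr heq]
  refine le_trans (lintegral_inner_le P X (s - t)) ?_
  rw [lintegral_norm_eq P hX, ← enorm_eq_nnnorm, ← ofReal_norm, norm_sub_rev]

lemma W1_key (P : Measure Ω) [IsProbabilityMeasure P]
    (X Y : Ω → EuclideanSpace ℝ (Fin d))
    (hXm : AEMeasurable X P) (hYm : AEMeasurable Y P)
    (hX : Integrable (fun ω => ‖X ω‖) P) (hY : Integrable (fun ω => ‖Y ω‖) P)
    (s t : EuclideanSpace ℝ (Fin d)) :
    W1 (P.map fun ω => ⟪s, X ω⟫) (P.map fun ω => ⟪s, Y ω⟫) ≤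
      W1 (P.map fun ω => ⟪t, X ω⟫) (P.map fun ω => ⟪t, Y ω⟫) +
      ENNReal.ofReal (‖t - s‖ * ((∫ ω, ‖X ω‖ ∂P) + ∫ ω, ‖Y ω‖ ∂P)) := by
  haveI h1 : IsProbabilityMeasure (P.map fun ω => ⟪s, X ω⟫) :=
    Measure.isProbabilityMeasure_map (inner_aemeasurable P hXm s)
  haveI h2 : IsProbabilityMeasure (P.map fun ω => ⟪s, Y ω⟫) :=
    Measure.isProbabilityMeasure_map (inner_aemeasurable P hYm s)
  haveI h3 : IsProbabilityMeasure (P.map fun ω => ⟪t, X ω⟫) :=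
    Measure.isProbabilityMeasure_map (inner_aemeasurable P hXm t)
  haveI h4 : IsProbabilityMeasure (P.map fun ω => ⟪t, Y ω⟫) :=
    Measure.isProbabilityMeasure_map (inner_aemeasurable P hYm t)
  calc W1 (P.map fun ω => ⟪s, X ω⟫) (P.map fun ω => ⟪s, Y ω⟫)
      ≤ W1 (P.map fun ω => ⟪s, X ω⟫) (P.map fun ω => ⟪t, X ω⟫) +
        W1 (P.map fun ω => ⟪t, X ω⟫) (P.map fun ω => ⟪s, Y ω⟫) := W1_triangle _ _ _
    _ ≤ W1 (P.map fun ω => ⟪s, X ω⟫) (P.map fun ω => ⟪t, X ω⟫) +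
        (W1 (P.map fun ω => ⟪t, X ω⟫) (P.map fun ω => ⟪t, Y ω⟫) +
         W1 (P.map fun ω => ⟪t, Y ω⟫) (P.map fun ω => ⟪s, Y ω⟫)) :=
        add_le_add le_rfl (W1_triangle _ _ _)
    _ ≤ ENNReal.ofReal (‖t - s‖) * ENNReal.ofReal (∫ ω, ‖X ω‖ ∂P) +
        (W1 (P.map fun ω => ⟪t, X ω⟫) (P.map fun ω => ⟪t, Y ω⟫) +
         ENNReal.ofReal (‖s - t‖) * ENNReal.ofReal (∫ ω, ‖Y ω‖ ∂P)) := by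
        refine add_le_add (W1_dir_le P hXm hX s t) (add_le_add le_rfl ?_)
        exact W1_dir_le P hYm hY t s
    _ = W1 (P.map fun ω => ⟪t, X ω⟫) (P.map fun ω => ⟪t, Y ω⟫) +
        ENNReal.ofReal (‖t - s‖ * ((∫ ω, ‖X ω‖ ∂P) + ∫ ω, ‖Y ω‖ ∂P)) := by
        rw [norm_sub_rev s t, ENNReal.ofReal_mul (norm_nonneg _),
          ENNReal.ofReal_add (integral_nonneg fun ω => norm_nonneg _)
            (integral_nonneg fun ω => norm_nonneg _), mul_add]
        ring

lemma W1_fin (P : Measure Ω) [IsProbabilityMeasure P]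
    {X Y : Ω → EuclideanSpace ℝ (Fin d)}
    (hXm : AEMeasurable X P) (hYm : AEMeasurable Y P)
    (hX : Integrable (fun ω => ‖X ω‖) P) (hY : Integrable (fun ω => ‖Y ω‖) P)
    (t : EuclideanSpace ℝ (Fin d)) :
    W1 (P.map fun ω => ⟪t, X ω⟫) (P.map fun ω => ⟪t, Y ω⟫) ≠ ⊤ := by
  haveI h3 : IsProbabilityMeasure (P.map fun ω => ⟪t, X ω⟫) :=
    Measure.isProbabilityMeasure_map (inner_aemeasurable P hXm t)
  haveI h4 : IsProbabilityMeasure (P.map fun ω => ⟪t, Y ω⟫) :=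
    Measure.isProbabilityMeasure_map (inner_aemeasurable P hYm t)
  refine ne_top_of_le_ne_top ?_ (W1_le_lintegral_add _ _)
  have hXc : ∫⁻ x, (‖x‖₊ : ℝ≥0∞) ∂(P.map fun ω => ⟪t, X ω⟫)
      = ∫⁻ ω, (‖⟪t, X ω⟫‖₊ : ℝ≥0∞) ∂P :=
    lintegral_map' (Measurable.aemeasurable (by fun_prop)) (inner_aemeasurable P hXm t)
  have hYc : ∫⁻ x, (‖x‖₊ : ℝ≥0∞) ∂(P.map fun ω => ⟪t, Y ω⟫)
      = ∫⁻ ω, (‖⟪t, Y ω⟫‖₊ : ℝ≥0∞) ∂P :=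
    lintegral_map' (Measurable.aemeasurable (by fun_prop)) (inner_aemeasurable P hYm t)
  rw [hXc, hYc]
  refine ENNReal.add_ne_top.2 ⟨?_, ?_⟩
  · refine ne_top_of_le_ne_top ?_ (lintegral_inner_le P X t)
    rw [lintegral_norm_eq P hX]
    exact ENNReal.mul_ne_top ENNReal.coe_ne_top ENNReal.ofReal_ne_top
  · refine ne_top_of_le_ne_top ?_ (lintegral_inner_le P Y t)
    rw [lintegral_norm_eq P hY]
    exact ENNReal.mul_ne_top ENNReal.coe_ne_top ENNReal.ofReal_ne_top

end Main2

/-- Lipschitz continuity of the sliced 1-Wasserstein distance in the projection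
direction. -/
theorem sliced_W1_lipschitz_in_direction {d : ℕ}
    {Ω : Type*} [MeasurableSpace Ω] (P : Measure Ω) [IsProbabilityMeasure P]
    (X Y : Ω → EuclideanSpace ℝ (Fin d))
    (hXm : AEMeasurable X P) (hYm : AEMeasurable Y P)
    (hX : Integrable (fun ω => ‖X ω‖) P) (hY : Integrable (fun ω => ‖Y ω‖) P)
    (s t : EuclideanSpace ℝ (Fin d)) (hs : ‖s‖ = 1) (ht : ‖t‖ = 1) :
    |(W1 (P.map fun ω => ⟪s, X ω⟫) (P.map fun ω => ⟪s, Y ω⟫)).toReal -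
      (W1 (P.map fun ω => ⟪t, X ω⟫) (P.map fun ω => ⟪t, Y ω⟫)).toReal| ≤
    ‖t - s‖ * ((∫ ω, ‖X ω‖ ∂P) + ∫ ω, ‖Y ω‖ ∂P) := by
  set c : ℝ := ‖t - s‖ * ((∫ ω, ‖X ω‖ ∂P) + ∫ ω, ‖Y ω‖ ∂P) with hc
  have hc0 : 0 ≤ c := mul_nonneg (norm_nonneg _)
    (add_nonneg (integral_nonneg fun ω => norm_nonneg _)
      (integral_nonneg fun ω => norm_nonneg _))
  have hsfin := W1_fin P hXm hYm hX hY s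
  have htfin := W1_fin P hXm hYm hX hY t
  have key1 := W1_key P X Y hXm hYm hX hY s t
  have key2 := W1_key P X Y hXm hYm hX hY t s
  rw [norm_sub_rev] at key2
  rw [abs_sub_le_iff]
  constructor
  · have h := ENNReal.toReal_mono
      (ENNReal.add_ne_top.2 ⟨htfin, ENNReal.ofReal_ne_top⟩) key1
    rw [ENNReal.toReal_add htfin ENNReal.ofReal_ne_top,
      ENNReal.toReal_ofReal hc0] at h
    linarith
  · have h := ENNReal.toReal_mono
      (ENNReal.add_ne_top.2 ⟨hsfin, ENNReal.ofReal_ne_top⟩) key2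
    rw [ENNReal.toReal_add hsfin ENNReal.ofReal_ne_top,
      ENNReal.toReal_ofReal hc0] at h
    linarith
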